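/- Let n ≥ 5 with n ≡ 2 (mod 3), and let x_0,...,x_{n-1} be nonnegative integers (indices modulo n) with x_i ≤ 1 and x_i + x_{i+1} + x_{i+2} ≥ 2 for all i. Then Σ_{i=0}^{n-1} x_i ≥ 2⌊n/3⌋ + 2. -/
import Mathlib

theorem lower_bound_2_mod_3 (n : ℕ) (hn : 5 ≤ n) (h3 : n % 3 = 2) (x : ZMod n → ℕ)
    (hle : ∀ i, x i ≤ 1) (hsum : ∀ i, 2 ≤ x i + x (i + 1) + x (i + 2)) :
    2 * (n / 3) + 2 ≤ ∑ i ∈ Finset.range n, x (i : ZMod n) := by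
  haveI : NeZero n := ⟨by omega⟩
  have hre : ∑ i ∈ Finset.range n, x (i : ZMod n) = ∑ j : ZMod n, x j := by
    refine Finset.sum_bij (t := (Finset.univ : Finset (ZMod n))) (g := x)
        (fun a _ => (a : ZMod n)) ?_ ?_ ?_ ?_
    · intro a ha; exact Finset.mem_univ _
    · intro a ha b hb hab
      have := congrArg ZMod.val hab
      rwa [ZMod.val_cast_of_lt (Finset.mem_range.mp ha),
        ZMod.val_cast_of_lt (Finset.mem_range.mp hb)] at this
    · intro b _
      exact ⟨b.val, Finset.mem_range.mpr b.val_lt, ZMod.natCast_rightInverse b⟩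
    · intro a ha; rfl
  have hshift : ∀ c : ZMod n, ∑ j : ZMod n, x (j + c) = ∑ j : ZMod n, x j := by
    intro c
    exact Fintype.sum_equiv (Equiv.addRight c) _ _ (fun j => rfl)
  have key : 2 * n ≤ 3 * ∑ j : ZMod n, x j := by
    have h1 : ∑ j : ZMod n, (2 : ℕ) ≤ ∑ j : ZMod n, (x j + x (j + 1) + x (j + 2)) :=
      Finset.sum_le_sum (fun j _ => hsum j)
    have h2 : ∑ j : ZMod n, (x j + x (j + 1) + x (j + 2))
        = 3 * ∑ j : ZMod n, x j := by
      rw [Finset.sum_add_distrib, Finset.sum_add_distrib, hshift 1, hshift 2]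
      ring
    have h3' : ∑ j : ZMod n, (2 : ℕ) = 2 * n := by
      simp [Finset.sum_const, ZMod.card, mul_comm]
    omega
  rw [hre]
  omega
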